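/- Let U_1, …, U_k (k ≥ 1) be independent nonnegative real random variables each satisfying P(U_i ≥ s) ≤ e^{-s} for all s ≥ 0, let T := U_1 + ⋯ + U_k, and define W := T - log(Σ_{l=0}^{k-1} T^l / l!). Then P(W ≥ w) ≤ e^{-w} for all w ≥ 0; that is, W is dominated by a valid IT anomaly score. (This is the paper's claim in Section 3.3 that, since the parents of a node in a polytree are marginally independent, the joint score S_joint(pa_i) := Σ_j S(pa_i^j) - log Σ_{l=0}^{k-1} (Σ_j S(pa_i^j))^l / l! over the k parents is again an IT score for the joint event pa_i.) -/

import Mathlib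

open MeasureTheory ProbabilityTheory Real Finset

-- FTC piece: ∫ s in a..1, (∑_{l<m}(t+log s)^l/l!)/s ds = ∑_{l<m} t^{l+1}/(l+1)!
lemma ftc_piece (m : ℕ) (t : ℝ) (ht : 0 ≤ t) :
    ∫ s in Real.exp (-t)..1, (∑ l ∈ range m, (t + Real.log s) ^ l / l.factorial) / s
      = ∑ l ∈ range m, t ^ (l + 1) / (l + 1).factorial := by
  set a := Real.exp (-t) with ha
  have ha0 : 0 < a := Real.exp_pos _
  have ha1 : a ≤ 1 := Real.exp_le_one_iff.mpr (by linarith)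
  have huicc : Set.uIcc a 1 = Set.Icc a 1 := Set.uIcc_of_le ha1
  have hpos : ∀ x ∈ Set.uIcc a 1, 0 < x := by
    intro x hx
    rw [huicc] at hx
    exact lt_of_lt_of_le ha0 hx.1
  have hderiv : ∀ x ∈ Set.uIcc a 1,
      HasDerivAt (fun s => ∑ l ∈ range m, (t + Real.log s) ^ (l + 1) / (l + 1).factorial)
        ((∑ l ∈ range m, (t + Real.log x) ^ l / l.factorial) / x) x := by
    intro x hx
    have hx0 : x ≠ 0 := (hpos x hx).ne'
    have hlog : HasDerivAt (fun s => t + Real.log s) x⁻¹ x :=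
      (Real.hasDerivAt_log hx0).const_add t
    have : HasDerivAt (fun s => ∑ l ∈ range m, (t + Real.log s) ^ (l + 1) / (l + 1).factorial)
        (∑ l ∈ range m, ((l + 1 : ℕ) * (t + Real.log x) ^ l * x⁻¹) / (l + 1).factorial) x := by
      apply HasDerivAt.fun_sum
      intro l _
      exact ((hlog.pow (l + 1)).div_const _).congr_deriv (by norm_num)
    convert this using 1
    rw [Finset.sum_div]
    apply Finset.sum_congr rfl
    intro l _
    rw [Nat.factorial_succ]
    push_cast
    field_simp
  have hcont : ContinuousOn (fun x => (∑ l ∈ range m, (t + Real.log x) ^ l / l.factorial) / x)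
      (Set.uIcc a 1) := by
    apply ContinuousOn.div
    · apply continuousOn_finset_sum
      intro l _
      exact ((continuousOn_const.add (Real.continuousOn_log.mono (fun x hx => (hpos x hx).ne'))).pow l).div_const _
    · exact continuousOn_id
    · intro x hx; exact (hpos x hx).ne'
  have := intervalIntegral.integral_eq_sub_of_hasDerivAt hderiv
    (hcont.intervalIntegrable)
  rw [this]
  simp only [Real.log_one, add_zero, ha, Real.log_exp]
  norm_num

lemma conv_step {Ω : Type*} [MeasurableSpace Ω] (μ : Measure Ω) [IsProbabilityMeasure μ]
    (X V : Ω → ℝ) (hX : Measurable X) (hV : Measurable V)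
    (hIndep : IndepFun X V μ) (m : ℕ)
    (hXtail : ∀ t : ℝ, 0 ≤ t → μ {ω | X ω ≥ t}
      ≤ ENNReal.ofReal (Real.exp (-t) * ∑ l ∈ range m, t ^ l / l.factorial))
    (hVtail : ∀ s : ℝ, 0 ≤ s → μ {ω | V ω ≥ s} ≤ ENNReal.ofReal (Real.exp (-s))) :
    ∀ t : ℝ, 0 ≤ t → μ {ω | X ω + V ω ≥ t}
      ≤ ENNReal.ofReal (Real.exp (-t) * ∑ l ∈ range (m + 1), t ^ l / l.factorial) := by
  intro t ht
  set ρ := μ.map X with hρ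
  set ν := μ.map V with hν
  haveI : IsProbabilityMeasure ρ := Measure.isProbabilityMeasure_map hX.aemeasurable
  haveI : IsProbabilityMeasure ν := Measure.isProbabilityMeasure_map hV.aemeasurable
  have hmap : μ.map (fun ω => (X ω, V ω)) = ρ.prod ν :=
    (indepFun_iff_map_prod_eq_prod_map_map hX.aemeasurable hV.aemeasurable).mp hIndep
  have hset : MeasurableSet {p : ℝ × ℝ | t ≤ p.1 + p.2} :=
    measurableSet_le measurable_const (measurable_fst.add measurable_snd)
  have h1 : μ {ω | X ω + V ω ≥ t} = ∫⁻ u, ν {v | t ≤ u + v} ∂ρ := by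
    have : μ {ω | X ω + V ω ≥ t} = (μ.map (fun ω => (X ω, V ω))) {p : ℝ × ℝ | t ≤ p.1 + p.2} := by
      rw [Measure.map_apply (hX.prodMk hV) hset]
      rfl
    rw [this, hmap, Measure.prod_apply hset]
    rfl
  -- inner bound
  have hinner : ∀ u : ℝ, ν {v | t ≤ u + v} ≤ ENNReal.ofReal (min 1 (Real.exp (u - t))) := by
    intro u
    rcases le_total u t with h | h
    · have hms : MeasurableSet {v : ℝ | t ≤ u + v} :=
        measurableSet_le measurable_const (measurable_const.add measurable_id)
      have : ν {v | t ≤ u + v} = μ {ω | V ω ≥ t - u} := by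
        rw [hν, Measure.map_apply hV hms]
        congr 1
        ext ω
        simp only [Set.mem_setOf_eq, Set.mem_preimage, ge_iff_le]
        constructor <;> intro <;> linarith
      rw [this]
      refine (hVtail (t - u) (by linarith)).trans ?_
      apply ENNReal.ofReal_le_ofReal
      rw [neg_sub]
      exact le_min (Real.exp_le_one_iff.mpr (by linarith)) le_rfl
    · have h1 : Real.exp (u - t) ≥ 1 := Real.one_le_exp_iff.mpr (by linarith)
      rw [min_eq_left h1, ENNReal.ofReal_one]
      exact prob_le_one
  have h2 : μ {ω | X ω + V ω ≥ t} ≤ ∫⁻ u, ENNReal.ofReal (min 1 (Real.exp (u - t))) ∂ρ := by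
    rw [h1]; exact lintegral_mono hinner
  -- layer cake
  have hf_meas : Measurable fun u : ℝ => min 1 (Real.exp (u - t)) :=
    measurable_const.min ((measurable_id.sub measurable_const).exp)
  have hlayer : ∫⁻ u, ENNReal.ofReal (min 1 (Real.exp (u - t))) ∂ρ
      = ∫⁻ s in Set.Ioi (0:ℝ), ρ {u | s < min 1 (Real.exp (u - t))} := by
    exact lintegral_eq_lintegral_meas_lt ρ
      (Filter.Eventually.of_forall fun u => le_min zero_le_one (Real.exp_pos _).le)
      hf_meas.aemeasurable
  clear h1 hinner
  set a := Real.exp (-t) with ha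
  have ha0 : 0 < a := Real.exp_pos _
  have ha1 : a ≤ 1 := Real.exp_le_one_iff.mpr (by linarith)
  -- tail bound for ρ
  have hρtail : ∀ x : ℝ, 0 ≤ x → ρ {u | x ≤ u}
      ≤ ENNReal.ofReal (Real.exp (-x) * ∑ l ∈ range m, x ^ l / l.factorial) := by
    intro x hx
    have hms : MeasurableSet {u : ℝ | x ≤ u} := measurableSet_le measurable_const measurable_id
    have : ρ {u | x ≤ u} = μ {ω | X ω ≥ x} := by
      rw [hρ, Measure.map_apply hX hms]; rfl
    rw [this]; exact hXtail x hx
  set F : ℝ → ℝ := fun s => Real.exp (-(t + Real.log s)) * ∑ l ∈ range m, (t + Real.log s) ^ l / l.factorial with hF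
  set H : ℝ → ENNReal := fun s => if s < a then 1 else if s < 1 then ENNReal.ofReal (F s) else 0 with hH
  have hHmeas : Measurable H := by
    apply Measurable.ite (measurableSet_lt measurable_id measurable_const) measurable_const
    apply Measurable.ite (measurableSet_lt measurable_id measurable_const) _ measurable_const
    apply ENNReal.measurable_ofReal.comp
    apply Measurable.mul
    · exact (measurable_const.add Real.measurable_log).neg.exp
    · exact Finset.measurable_sum _ fun l _ => ((measurable_const.add Real.measurable_log).pow_const l).div_const _
  have hbound : ∀ s ∈ Set.Ioi (0:ℝ), ρ {u | s < min 1 (Real.exp (u - t))} ≤ H s := by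
    intro s hs
    simp only [Set.mem_Ioi] at hs
    by_cases hs1 : s < 1
    · have hsub : {u : ℝ | s < min 1 (Real.exp (u - t))} ⊆ {u : ℝ | t + Real.log s ≤ u} := by
        intro u hu
        simp only [Set.mem_setOf_eq, lt_min_iff] at hu
        have := Real.log_lt_log hs hu.2
        rw [Real.log_exp] at this
        simp only [Set.mem_setOf_eq]
        linarith
      by_cases hsa : s < a
      · rw [hH]; simp only [if_pos hsa]
        exact prob_le_one
      · have hx0 : 0 ≤ t + Real.log s := by
          have : Real.log a ≤ Real.log s := Real.log_le_log ha0 (not_lt.mp hsa)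
          rw [ha, Real.log_exp] at this
          linarith
        rw [hH]; simp only [if_neg hsa, if_pos hs1]
        exact (measure_mono hsub).trans (hρtail _ hx0)
    · have : {u : ℝ | s < min 1 (Real.exp (u - t))} = ∅ := by
        ext u
        simp only [Set.mem_setOf_eq, Set.mem_empty_iff_false, iff_false, not_lt, lt_min_iff]
        exact fun h => absurd h.1 (not_lt.mpr (not_lt.mp hs1))
      rw [hH]; simp only [this, measure_empty, if_neg (not_lt.mpr (ha1.trans (not_lt.mp hs1))), if_neg hs1, le_refl]
  have h3 : ∫⁻ s in Set.Ioi (0:ℝ), ρ {u | s < min 1 (Real.exp (u - t))} ≤ ∫⁻ s in Set.Ioi (0:ℝ), H s := by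
    apply setLIntegral_mono hHmeas hbound
  -- compute ∫ H
  have hsplit : Set.Ioi (0:ℝ) = (Set.Ioo 0 a ∪ Set.Ico a 1) ∪ Set.Ici 1 := by
    rw [Set.Ioo_union_Ico_eq_Ioo ha0 ha1, Set.Ioo_union_Ici_eq_Ioi zero_lt_one]
  have hdisj1 : Disjoint (Set.Ioo (0:ℝ) a) (Set.Ico a 1) := by
    rw [Set.disjoint_left]
    rintro x ⟨_, h2⟩ ⟨h3, _⟩
    exact absurd h3 (not_le.mpr h2)
  have hdisj2 : Disjoint (Set.Ioo (0:ℝ) a ∪ Set.Ico a 1) (Set.Ici (1:ℝ)) := by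
    rw [Set.disjoint_left]
    rintro x (⟨_, h2⟩ | ⟨_, h2⟩) h3 <;>
      exact absurd (Set.mem_Ici.mp h3) (not_le.mpr (by linarith))
  have hIcalc : ∫⁻ s in Set.Ioi (0:ℝ), H s
      = (∫⁻ s in Set.Ioo (0:ℝ) a, H s) + (∫⁻ s in Set.Ico a 1, H s) + (∫⁻ s in Set.Ici (1:ℝ), H s) := by
    rw [hsplit, lintegral_union measurableSet_Ici hdisj2, lintegral_union measurableSet_Ico hdisj1]
  have hpiece1 : ∫⁻ s in Set.Ioo (0:ℝ) a, H s = ENNReal.ofReal a := by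
    rw [setLIntegral_congr_fun_ae measurableSet_Ioo
      (Filter.Eventually.of_forall (fun s hs => by rw [hH]; simp only [if_pos hs.2]) :
        ∀ᵐ s ∂volume, s ∈ Set.Ioo (0:ℝ) a → H s = 1)]
    rw [setLIntegral_one, Real.volume_Ioo, sub_zero]
  have hpiece3 : ∫⁻ s in Set.Ici (1:ℝ), H s = 0 := by
    rw [setLIntegral_congr_fun_ae measurableSet_Ici
      (Filter.Eventually.of_forall (fun s hs => by
        rw [hH]
        have h1 : ¬ s < a := not_lt.mpr (ha1.trans hs)
        have h2 : ¬ s < 1 := not_lt.mpr hs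
        simp only [if_neg h1, if_neg h2]) :
        ∀ᵐ s ∂volume, s ∈ Set.Ici (1:ℝ) → H s = 0)]
    exact lintegral_zero
  have hFcont : ContinuousOn F (Set.Icc a 1) := by
    have hlog : ContinuousOn (fun s : ℝ => t + Real.log s) (Set.Icc a 1) :=
      continuousOn_const.add (Real.continuousOn_log.mono (fun x hx => ne_of_gt (lt_of_lt_of_le ha0 hx.1)))
    exact (hlog.neg.rexp).mul (continuousOn_finset_sum _ fun l _ => (hlog.pow l).div_const _)
  have hFnn : ∀ s ∈ Set.Ico a 1, 0 ≤ F s := by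
    intro s hs
    have hx0 : 0 ≤ t + Real.log s := by
      have : Real.log a ≤ Real.log s := Real.log_le_log ha0 hs.1
      rw [ha, Real.log_exp] at this
      linarith
    apply mul_nonneg (Real.exp_pos _).le
    exact Finset.sum_nonneg fun l _ => div_nonneg (pow_nonneg hx0 l) (Nat.cast_nonneg _)
  have hFint : IntegrableOn F (Set.Ico a 1) volume :=
    (hFcont.integrableOn_Icc).mono_set Set.Ico_subset_Icc_self
  have hpiece2 : ∫⁻ s in Set.Ico a 1, H s
      = ENNReal.ofReal (Real.exp (-t) * ∑ l ∈ range m, t ^ (l + 1) / (l + 1).factorial) := by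
    rw [setLIntegral_congr_fun_ae measurableSet_Ico
      (Filter.Eventually.of_forall (fun s hs => by
        rw [hH]
        simp only [if_neg (not_lt.mpr hs.1), if_pos hs.2]) :
        ∀ᵐ s ∂volume, s ∈ Set.Ico a 1 → H s = ENNReal.ofReal (F s))]
    rw [← ofReal_integral_eq_lintegral_ofReal hFint
      ((ae_restrict_iff' measurableSet_Ico).mpr (Filter.Eventually.of_forall hFnn))]
    congr 1
    have heq : ∫ s in Set.Ico a 1, F s = ∫ s in a..1, F s := by
      rw [intervalIntegral.integral_of_le ha1, integral_Ico_eq_integral_Ioo, integral_Ioc_eq_integral_Ioo]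
    rw [heq]
    have heq2 : ∫ s in a..1, F s
        = ∫ s in a..1, Real.exp (-t) * ((∑ l ∈ range m, (t + Real.log s) ^ l / l.factorial) / s) := by
      apply intervalIntegral.integral_congr
      intro s hs
      rw [Set.uIcc_of_le ha1] at hs
      have hs0 : 0 < s := lt_of_lt_of_le ha0 hs.1
      rw [hF]
      simp only
      rw [neg_add, Real.exp_add, Real.exp_neg t, Real.exp_neg (Real.log s), Real.exp_log hs0]
      ring
    rw [heq2, intervalIntegral.integral_const_mul, ftc_piece m t ht]
  rw [hIcalc, hpiece1, hpiece2, hpiece3, add_zero, ← ENNReal.ofReal_add (Real.exp_pos _).le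
    (mul_nonneg (Real.exp_pos _).le (Finset.sum_nonneg fun l _ =>
      div_nonneg (pow_nonneg ht _) (Nat.cast_nonneg _)))] at h3
  refine (h2.trans (le_of_eq hlayer)).trans (h3.trans (le_of_eq ?_))
  congr 1
  rw [Finset.sum_range_succ']
  simp only [pow_zero, Nat.factorial_zero, Nat.cast_one]
  ring
lemma sum_tail {Ω : Type*} [MeasurableSpace Ω] (μ : Measure Ω) [IsProbabilityMeasure μ]
    {k : ℕ} (U : Fin k → Ω → ℝ) (hUmeas : ∀ i, Measurable (U i))
    (hIndep : iIndepFun U μ)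
    (hTail : ∀ i, ∀ s : ℝ, 0 ≤ s → μ {ω | U i ω ≥ s} ≤ ENNReal.ofReal (Real.exp (-s))) :
    ∀ s : Finset (Fin k), s.Nonempty → ∀ t : ℝ, 0 ≤ t →
      μ {ω | (∑ i ∈ s, U i) ω ≥ t}
        ≤ ENNReal.ofReal (Real.exp (-t) * ∑ l ∈ range s.card, t ^ l / l.factorial) := by
  intro s
  induction s using Finset.cons_induction with
  | empty => intro h; exact absurd h (by simp)
  | cons i s hi ih =>
    intro _ t ht
    by_cases hs : s.Nonempty
    · have hXmeas : Measurable (∑ j ∈ s, U j) := by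
        have hm : Measurable fun ω => ∑ j ∈ s, U j ω :=
          Finset.measurable_sum s fun j _ => hUmeas j
        have heq : (∑ j ∈ s, U j) = fun ω => ∑ j ∈ s, U j ω := by
          funext ω; exact Finset.sum_apply ω s U
        rw [heq]; exact hm
      have hindep : IndepFun (∑ j ∈ s, U j) (U i) μ :=
        hIndep.indepFun_finsetSum_of_notMem hUmeas hi
      have key := conv_step μ (∑ j ∈ s, U j) (U i) hXmeas (hUmeas i) hindep s.card
        (fun t' ht' => ih hs t' ht') (hTail i) t ht
      have hseteq : {ω | (∑ j ∈ Finset.cons i s hi, U j) ω ≥ t}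
          = {ω | (∑ j ∈ s, U j) ω + U i ω ≥ t} := by
        ext ω
        simp only [Set.mem_setOf_eq, Finset.sum_cons, Pi.add_apply, Finset.sum_apply]
        constructor <;> intro <;> linarith
      rw [hseteq, Finset.card_cons]
      exact key
    · have hsempty : s = ∅ := Finset.not_nonempty_iff_eq_empty.mp hs
      subst hsempty
      have hseteq : {ω | (∑ j ∈ Finset.cons i ∅ hi, U j) ω ≥ t} = {ω | U i ω ≥ t} := by
        ext ω
        simp [Finset.sum_cons]
      rw [hseteq]
      refine (hTail i t ht).trans (le_of_eq ?_)
      congr 1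
      simp

/-- Paper's Section 3.3: the joint score over independent parents is an
IT score. Let `U 0, …, U (k-1)` (`k ≥ 1`) be independent nonnegative real random
variables each satisfying `P(U i ≥ s) ≤ e^{-s}` for all `s ≥ 0`, let
`T = U 0 + ⋯ + U (k-1)`, and define `W = T - log (Σ_{l=0}^{k-1} T^l / l!)`. Then
`P(W ≥ w) ≤ e^{-w}` for all `w ≥ 0`, i.e. `W` is dominated by a valid IT anomaly score. -/
theorem joint_parent_score_is_it_score
    {Ω : Type*} [MeasurableSpace Ω] (μ : Measure Ω) [IsProbabilityMeasure μ]
    (k : ℕ) (hk : 1 ≤ k)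
    (U : Fin k → Ω → ℝ) (hUmeas : ∀ i, Measurable (U i))
    (hIndep : iIndepFun U μ)
    (hU0 : ∀ i ω, 0 ≤ U i ω)
    (hTail : ∀ i, ∀ s : ℝ, 0 ≤ s → μ {ω | U i ω ≥ s} ≤ ENNReal.ofReal (Real.exp (-s)))
    (T : Ω → ℝ) (hT : ∀ ω, T ω = ∑ i : Fin k, U i ω)
    (W : Ω → ℝ)
    (hW : ∀ ω, W ω = T ω - Real.log (∑ l ∈ range k, T ω ^ l / l.factorial)) :
    ∀ w : ℝ, 0 ≤ w → μ {ω | W ω ≥ w} ≤ ENNReal.ofReal (Real.exp (-w)) := by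
  intro w hw
  have hE1 : ∀ t : ℝ, 0 ≤ t → (1:ℝ) ≤ ∑ l ∈ range k, t ^ l / l.factorial := by
    intro t ht
    have h0 : (0:ℕ) ∈ range k := Finset.mem_range.mpr hk
    calc (1:ℝ) = t ^ 0 / (Nat.factorial 0 : ℝ) := by simp
    _ ≤ ∑ l ∈ range k, t ^ l / l.factorial :=
      Finset.single_le_sum (fun l _ => div_nonneg (pow_nonneg ht l) (Nat.cast_nonneg _)) h0
  set G : ℝ → ℝ := fun t => t - Real.log (∑ l ∈ range k, t ^ l / l.factorial) with hG
  set C := {t : ℝ | 0 ≤ t ∧ w ≤ G t} with hC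
  have hT0 : ∀ ω, 0 ≤ T ω := fun ω => by
    rw [hT ω]; exact Finset.sum_nonneg fun i _ => hU0 i ω
  have hmem : ∀ ω, W ω ≥ w → T ω ∈ C := by
    intro ω hω
    refine ⟨hT0 ω, ?_⟩
    show w ≤ G (T ω)
    rw [hG]
    dsimp only
    rw [← hW ω]
    exact hω
  by_cases hCne : C.Nonempty
  · have hbdd : BddBelow C := ⟨0, fun x hx => hx.1⟩
    have hclosed : IsClosed C := by
      have hEcont : Continuous fun t : ℝ => ∑ l ∈ range k, t ^ l / l.factorial :=
        continuous_finset_sum _ fun l _ => (continuous_pow l).div_const _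
      have hGcont : ContinuousOn G (Set.Ici (0:ℝ)) := by
        apply ContinuousOn.sub continuousOn_id
        apply Real.continuousOn_log.comp hEcont.continuousOn
        intro t ht
        simp only [Set.mem_compl_iff, Set.mem_singleton_iff]
        have h1 := hE1 t ht
        intro h; rw [h] at h1; linarith
      have hCeq : C = Set.Ici (0:ℝ) ∩ G ⁻¹' Set.Ici w := by
        ext t
        simp only [hC, Set.mem_setOf_eq, Set.mem_inter_iff, Set.mem_Ici, Set.mem_preimage]
      rw [hCeq]
      exact hGcont.preimage_isClosed_of_isClosed isClosed_Ici isClosed_Ici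
    set t₀ := sInf C with ht₀def
    have ht₀mem : t₀ ∈ C := hclosed.csInf_mem hCne hbdd
    have hsub : {ω | W ω ≥ w} ⊆ {ω | (∑ i ∈ (Finset.univ : Finset (Fin k)), U i) ω ≥ t₀} := by
      intro ω hω
      have hle : t₀ ≤ T ω := csInf_le hbdd (hmem ω hω)
      simp only [Set.mem_setOf_eq, Finset.sum_apply, ge_iff_le]
      rw [hT ω] at hle
      exact hle
    have hne : (Finset.univ : Finset (Fin k)).Nonempty := ⟨⟨0, hk⟩, Finset.mem_univ _⟩
    have hb := sum_tail μ U hUmeas hIndep hTail Finset.univ hne t₀ ht₀mem.1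
    rw [Finset.card_univ, Fintype.card_fin] at hb
    refine (measure_mono hsub).trans (hb.trans ?_)
    apply ENNReal.ofReal_le_ofReal
    have hE0 : (0:ℝ) < ∑ l ∈ range k, t₀ ^ l / l.factorial :=
      lt_of_lt_of_le one_pos (hE1 t₀ ht₀mem.1)
    have hlog : Real.log (∑ l ∈ range k, t₀ ^ l / l.factorial) ≤ t₀ - w := by
      have h2 := ht₀mem.2
      rw [hG] at h2
      dsimp only at h2
      linarith
    have hEle : (∑ l ∈ range k, t₀ ^ l / l.factorial) ≤ Real.exp (t₀ - w) := by
      rw [← Real.exp_log hE0]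
      exact Real.exp_le_exp.mpr hlog
    calc Real.exp (-t₀) * (∑ l ∈ range k, t₀ ^ l / l.factorial)
        ≤ Real.exp (-t₀) * Real.exp (t₀ - w) :=
          mul_le_mul_of_nonneg_left hEle (Real.exp_pos _).le
      _ = Real.exp (-w) := by rw [← Real.exp_add]; ring_nf
  · have hempty : {ω | W ω ≥ w} = ∅ := by
      ext ω
      simp only [Set.mem_setOf_eq, Set.mem_empty_iff_false, iff_false]
      intro hω
      exact hCne ⟨T ω, hmem ω hω⟩
    rw [hempty]
    simp
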